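/- Let B ∈ ℂ^{n×k} with k ≤ n and P ∈ ℂ^{n×k} with Pᴴ P = I_k. Then Re(tr(Pᴴ B)) = ‖B‖_tr if and only if B = PΛ for some positive semidefinite Hermitian matrix Λ ∈ ℂ^{k×k} (i.e., P is an orthonormal polar factor of B). -/

import Mathlib

open scoped ComplexOrder
open Matrix

/-- The tuple `f` rearranged into decreasing order; `sortedDesc f 0` is the largest entry. -/
noncomputable def sortedDesc {m : ℕ} (f : Fin m → ℝ) : Fin m → ℝ :=
  fun i => (f ∘ Tuple.sort f) i.rev

/-- The singular values of a complex matrix, in decreasing order. -/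
noncomputable def sv {n k : ℕ} (B : Matrix (Fin n) (Fin k) ℂ) : Fin k → ℝ :=
  sortedDesc fun i =>
    Real.sqrt ((Matrix.posSemidef_conjTranspose_mul_self B).isHermitian.eigenvalues i)

/-- The trace (nuclear) norm: the sum of the singular values. -/
noncomputable def trNorm {n k : ℕ} (B : Matrix (Fin n) (Fin k) ℂ) : ℝ := ∑ i, sv B i

/-- The Frobenius norm. -/
noncomputable def frobNorm {n k : ℕ} (A : Matrix (Fin n) (Fin k) ℂ) : ℝ :=
  Real.sqrt (∑ i, ∑ j, ‖A i j‖ ^ 2)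

/-- `‖sin Θ(R(X), R(Y))‖_F` where `Θ` is the diagonal matrix of canonical angles
`θ_i = arccos σ_i(Xᴴ Y)` between the column spaces of `X` and `Y`. -/
noncomputable def sinThetaF {n k : ℕ} (X Y : Matrix (Fin n) (Fin k) ℂ) : ℝ :=
  Real.sqrt (∑ i, Real.sin (Real.arccos (sv (Xᴴ * Y) i)) ^ 2)

/-- The smallest singular value. -/
noncomputable def smin {n k : ℕ} (B : Matrix (Fin n) (Fin k) ℂ) : ℝ := ⨅ i, sv B i

/-- The spectral norm (largest singular value). -/
noncomputable def s2norm {n k : ℕ} (B : Matrix (Fin n) (Fin k) ℂ) : ℝ := ⨆ i, sv B i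

/-- The positive semidefinite square root of a positive semidefinite matrix (as in the older Mathlib). -/
noncomputable def Matrix.PosSemidef.sqrt {n : Type*} [Fintype n] [DecidableEq n] {A : Matrix n n ℂ}
    (hA : A.PosSemidef) : Matrix n n ℂ :=
  hA.1.eigenvectorUnitary.1 * diagonal ((↑) ∘ (√·) ∘ hA.1.eigenvalues) *
  (star hA.1.eigenvectorUnitary : Matrix n n ℂ)

/-- The orthonormal polar factor `B (Bᴴ B)^{-1/2}` (for `B` of full column rank). -/
noncomputable def polarFactor {n k : ℕ} (B : Matrix (Fin n) (Fin k) ℂ) :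
    Matrix (Fin n) (Fin k) ℂ :=
  B * ((Matrix.posSemidef_conjTranspose_mul_self B).sqrt)⁻¹

/-- Eigenvalues of a Hermitian matrix, in decreasing order. -/
noncomputable def eigsDesc {n : ℕ} {H : Matrix (Fin n) (Fin n) ℂ} (hH : H.IsHermitian) :
    Fin n → ℝ :=
  sortedDesc hH.eigenvalues

lemma sum_sortedDesc {m : ℕ} (f : Fin m → ℝ) : ∑ i, sortedDesc f i = ∑ i, f i := by
  rw [show (∑ i, sortedDesc f i) = ∑ i, (f ∘ (Tuple.sort f)) ((Fin.revPerm : Equiv.Perm (Fin m)) i) from rfl,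
    Equiv.sum_comp Fin.revPerm]
  exact Equiv.sum_comp (Tuple.sort f) f

noncomputable def ecol {n k : ℕ} (X : Matrix (Fin n) (Fin k) ℂ) (i : Fin k) :
    EuclideanSpace ℂ (Fin n) := WithLp.toLp 2 (fun j => X j i)

lemma inner_ecol {n k : ℕ} (X Y : Matrix (Fin n) (Fin k) ℂ) (i i' : Fin k) :
    (inner ℂ (ecol X i) (ecol Y i') : ℂ) = (Xᴴ * Y) i i' := by
  simp [PiLp.inner_apply, ecol, Matrix.mul_apply, Matrix.conjTranspose_apply, RCLike.inner_apply,
    mul_comm]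

lemma trace_sqrt_re {k : ℕ} {M : Matrix (Fin k) (Fin k) ℂ} (hM : M.PosSemidef) :
    (Matrix.trace hM.sqrt).re = ∑ i, Real.sqrt (hM.isHermitian.eigenvalues i) := by
  rw [Matrix.PosSemidef.sqrt, Matrix.trace_mul_comm, ← mul_assoc,
    Unitary.coe_star_mul_self, one_mul, Matrix.trace_diagonal]
  simp [Complex.ofReal_re]

open scoped MatrixOrder in
lemma Matrix.PosSemidef.sqrt_eq_cfc' {k : ℕ} {A : Matrix (Fin k) (Fin k) ℂ} (hA : A.PosSemidef) :
    hA.sqrt = CFC.sqrt A := by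
  rw [CFC.sqrt_eq_cfc, cfc_nnreal_eq_real _ A hA.nonneg, hA.1.cfc_eq, IsHermitian.cfc,
    Unitary.conjStarAlgAut_apply, Matrix.PosSemidef.sqrt]
  congr 3
  funext i
  simp [hA.eigenvalues_nonneg i]

open scoped MatrixOrder in
lemma Matrix.PosSemidef.posSemidef_sqrt {k : ℕ} {A : Matrix (Fin k) (Fin k) ℂ} (hA : A.PosSemidef) :
    hA.sqrt.PosSemidef := by
  rw [hA.sqrt_eq_cfc']
  exact nonneg_iff_posSemidef.mp (CFC.sqrt_nonneg A)

open scoped MatrixOrder in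
lemma Matrix.PosSemidef.eq_sqrt_of_sq_eq {k : ℕ} {A B : Matrix (Fin k) (Fin k) ℂ} (hA : A.PosSemidef)
    (hB : B.PosSemidef) (hAB : A ^ 2 = B) : A = hB.sqrt := by
  rw [hB.sqrt_eq_cfc', ← hAB, CFC.sqrt_sq A hA.nonneg]

theorem re_trace_eq_trNorm_iff {n k : ℕ} (hkn : k ≤ n) (B P : Matrix (Fin n) (Fin k) ℂ)
    (hP : Pᴴ * P = 1) :
    (Matrix.trace (Pᴴ * B)).re = trNorm B ↔
      ∃ Λ : Matrix (Fin k) (Fin k) ℂ, Λ.PosSemidef ∧ B = P * Λ := by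
  classical
  have hM : (Bᴴ * B).PosSemidef := Matrix.posSemidef_conjTranspose_mul_self B
  set lam := hM.isHermitian.eigenvalues with hlam
  have hlam0 : ∀ i, 0 ≤ lam i := fun i => hM.eigenvalues_nonneg i
  have htrNorm : trNorm B = ∑ i, Real.sqrt (lam i) := by
    unfold trNorm sv
    rw [sum_sortedDesc]
  set V : Matrix (Fin k) (Fin k) ℂ := (Matrix.IsHermitian.eigenvectorUnitary hM.isHermitian : Matrix (Fin k) (Fin k) ℂ) with hV
  have hVsV : Vᴴ * V = 1 := by
    rw [← Matrix.star_eq_conjTranspose]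
    exact Unitary.coe_star_mul_self _
  have hVVs : V * Vᴴ = 1 := by
    rw [← Matrix.star_eq_conjTranspose]
    exact Unitary.coe_mul_star_self _
  have hspec : Vᴴ * (Bᴴ * B) * V = Matrix.diagonal (RCLike.ofReal ∘ lam) := by
    rw [← Matrix.star_eq_conjTranspose]
    have := hM.isHermitian.conjStarAlgAut_star_eigenvectorUnitary
    rwa [Unitary.conjStarAlgAut_star_apply] at this
  constructor
  · intro h
    set X := P * V with hX
    set Y := B * V with hY
    have hXX : Xᴴ * X = 1 := by
      rw [hX, Matrix.conjTranspose_mul, Matrix.mul_assoc, ← Matrix.mul_assoc Pᴴ P V, hP,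
        Matrix.one_mul, hVsV]
    have hYY : Yᴴ * Y = Matrix.diagonal (RCLike.ofReal ∘ lam) := by
      rw [hY, Matrix.conjTranspose_mul, ← hspec]
      simp only [Matrix.mul_assoc]
    have htr : Matrix.trace (Pᴴ * B) = Matrix.trace (Xᴴ * Y) := by
      have h1 : Xᴴ * Y = Vᴴ * (Pᴴ * B) * V := by
        rw [hX, hY, Matrix.conjTranspose_mul]
        simp only [Matrix.mul_assoc]
      rw [h1, Matrix.trace_mul_comm (Vᴴ * (Pᴴ * B)) V, ← Matrix.mul_assoc, hVVs, Matrix.one_mul]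
    have hxnorm : ∀ i, ‖ecol X i‖ = 1 := by
      intro i
      have h1 : (inner ℂ (ecol X i) (ecol X i) : ℂ) = 1 := by
        rw [inner_ecol, hXX, Matrix.one_apply_eq]
      have h2 : ‖ecol X i‖ ^ 2 = 1 := by
        rw [← inner_self_eq_norm_sq (𝕜 := ℂ), h1]
        simp
      nlinarith [norm_nonneg (ecol X i)]
    have hynorm : ∀ i, ‖ecol Y i‖ = Real.sqrt (lam i) := by
      intro i
      have h1 : (inner ℂ (ecol Y i) (ecol Y i) : ℂ) = (lam i : ℂ) := by
        rw [inner_ecol, hYY, Matrix.diagonal_apply_eq]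
        rfl
      have h2 : ‖ecol Y i‖ ^ 2 = lam i := by
        rw [← inner_self_eq_norm_sq (𝕜 := ℂ), h1]
        simp
      rw [← h2, Real.sqrt_sq (norm_nonneg _)]
    have htrsum : (Matrix.trace (Pᴴ * B)).re = ∑ i, (inner ℂ (ecol X i) (ecol Y i) : ℂ).re := by
      rw [htr, Matrix.trace, Complex.re_sum]
      exact Finset.sum_congr rfl fun i _ => by rw [Matrix.diag_apply, ← inner_ecol]
    have hle : ∀ i : Fin k, (inner ℂ (ecol X i) (ecol Y i) : ℂ).re ≤ Real.sqrt (lam i) := by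
      intro i
      calc (inner ℂ (ecol X i) (ecol Y i) : ℂ).re ≤ ‖(inner ℂ (ecol X i) (ecol Y i) : ℂ)‖ :=
            Complex.re_le_norm _
        _ ≤ ‖ecol X i‖ * ‖ecol Y i‖ := norm_inner_le_norm _ _
        _ = Real.sqrt (lam i) := by rw [hxnorm, hynorm, one_mul]
    have heq : ∀ i ∈ Finset.univ, (inner ℂ (ecol X i) (ecol Y i) : ℂ).re = Real.sqrt (lam i) := by
      rw [← Finset.sum_eq_sum_iff_of_le (fun i _ => hle i)]
      rw [← htrsum, h, htrNorm]
    have hcols : ∀ i j, Y j i = (Real.sqrt (lam i) : ℂ) * X j i := by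
      intro i j
      have hre := heq i (Finset.mem_univ i)
      set z : ℂ := inner ℂ (ecol X i) (ecol Y i) with hz
      have habs : ‖z‖ = z.re := by
        have h1 : ‖z‖ ≤ Real.sqrt (lam i) := by
          calc ‖z‖ = ‖z‖ := rfl
            _ ≤ ‖ecol X i‖ * ‖ecol Y i‖ := norm_inner_le_norm _ _
            _ = Real.sqrt (lam i) := by rw [hxnorm, hynorm, one_mul]
        have h2 := Complex.re_le_norm z
        linarith
      have him : z.im = 0 := by
        have := Complex.sq_norm z
        rw [habs, Complex.normSq_apply] at this
        nlinarith
      have hzval : z = ((‖ecol X i‖ : ℂ) * ‖ecol Y i‖) := by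
        rw [hxnorm, hynorm]
        apply Complex.ext
        · simp [hre]
        · simp [him]
      have hprop := inner_eq_norm_mul_iff.mp hzval
      rw [hxnorm, hynorm] at hprop
      have hj := congrArg (fun v => v j) hprop
      simp only [PiLp.smul_apply, smul_eq_mul, RCLike.ofReal_one, Complex.ofReal_one, one_mul] at hj
      exact hj.symm
    have hYXD : Y = X * Matrix.diagonal (fun i => (Real.sqrt (lam i) : ℂ)) := by
      ext j i
      rw [Matrix.mul_diagonal, hcols i j, mul_comm]
    refine ⟨hM.sqrt, hM.posSemidef_sqrt, ?_⟩
    have hBfromY : B = Y * Vᴴ := by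
      rw [hY, Matrix.mul_assoc, hVVs, Matrix.mul_one]
    have hfin : Y * Vᴴ = P * hM.sqrt := by
      rw [hYXD, hX, Matrix.PosSemidef.sqrt, ← Matrix.star_eq_conjTranspose V]
      simp only [Matrix.mul_assoc]
      rfl
    exact hBfromY.trans hfin
  · rintro ⟨Λ, hΛ, rfl⟩
    have hPB : Pᴴ * (P * Λ) = Λ := by rw [← Matrix.mul_assoc, hP, Matrix.one_mul]
    have hMsq : Λ ^ 2 = (P * Λ)ᴴ * (P * Λ) := by
      rw [Matrix.conjTranspose_mul, Matrix.mul_assoc, ← Matrix.mul_assoc Pᴴ P Λ, hP,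
        Matrix.one_mul, hΛ.isHermitian, sq]
    have hsqrt : Λ = hM.sqrt := Matrix.PosSemidef.eq_sqrt_of_sq_eq hΛ hM hMsq
    rw [hPB, htrNorm, hsqrt]
    exact trace_sqrt_re hM
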